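/- Let x_1, ..., x_n be vectors in R^m, let l : R -> R be differentiable, let beta > 0 and tau in R, and suppose t : R^m -> R is differentiable and satisfies sum_{i=1}^n l(beta*(<w, x_i> - t(w))) = n*tau for all w in R^m. If at a point w_0 the denominator D = sum_{i=1}^n l'(beta*(<w_0, x_i> - t(w_0))) is nonzero, then the gradient of t at w_0 is given by grad t(w_0) = (1/D) * sum_{i=1}^n l'(beta*(<w_0, x_i> - t(w_0))) * x_i. -/

import Mathlib

open scoped InnerProductSpace

/-- implicit differentiation of the surrogate quantile identity: if
`∑ᵢ l(β(⟪w, xᵢ⟫ - t(w))) = n·τ` for all `w`, then at any point where the denominator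
`D = ∑ᵢ l'(β(⟪w₀, xᵢ⟫ - t(w₀)))` is nonzero, the gradient of `t` is the `l'`-weighted
average of the samples. -/
theorem gradient_of_implicit_threshold {m n : ℕ}
    (x : Fin n → EuclideanSpace ℝ (Fin m))
    (l : ℝ → ℝ) (hl : Differentiable ℝ l)
    (β τ : ℝ) (hβ : 0 < β)
    (t : EuclideanSpace ℝ (Fin m) → ℝ) (ht : Differentiable ℝ t)
    (himp : ∀ w : EuclideanSpace ℝ (Fin m), ∑ i, l (β * (⟪w, x i⟫_ℝ - t w)) = (n : ℝ) * τ)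
    (w₀ : EuclideanSpace ℝ (Fin m))
    (hD : (∑ i, deriv l (β * (⟪w₀, x i⟫_ℝ - t w₀))) ≠ 0) :
    gradient t w₀ = (1 / ∑ i, deriv l (β * (⟪w₀, x i⟫_ℝ - t w₀))) •
      ∑ i, deriv l (β * (⟪w₀, x i⟫_ℝ - t w₀)) • x i := by
  set G := gradient t w₀ with hGdef
  have hGt : HasFDerivAt t ((InnerProductSpace.toDual ℝ _) G) w₀ :=
    ((ht w₀).hasGradientAt).hasFDerivAt
  -- derivative of each inner function
  set u : Fin n → ℝ := fun i => β * (⟪w₀, x i⟫_ℝ - t w₀) with hu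
  have hF : HasFDerivAt (fun w => ∑ i, l (β * (⟪w, x i⟫_ℝ - t w)))
      (∑ i, (deriv l (u i)) • (β • ((innerSL ℝ (x i)) - (InnerProductSpace.toDual ℝ _) G))) w₀ := by
    apply HasFDerivAt.fun_sum
    intro i _
    have hinner : HasFDerivAt (fun w : EuclideanSpace ℝ (Fin m) => ⟪w, x i⟫_ℝ)
        (innerSL ℝ (x i)) w₀ := by
      have h1 : (fun w : EuclideanSpace ℝ (Fin m) => ⟪w, x i⟫_ℝ) = ⇑(innerSL ℝ (x i)) :=
        funext fun w => (real_inner_comm w (x i)).symm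
      rw [h1]
      exact (innerSL ℝ (x i)).hasFDerivAt
    have hmid : HasFDerivAt (fun w => β * (⟪w, x i⟫_ℝ - t w))
        (β • ((innerSL ℝ (x i)) - (InnerProductSpace.toDual ℝ _) G)) w₀ :=
      (hinner.sub hGt).const_smul β
    exact ((hl (u i)).hasDerivAt.comp_hasFDerivAt w₀ hmid)
  have hzero : (∑ i, (deriv l (u i)) • (β • ((innerSL ℝ (x i)) - (InnerProductSpace.toDual ℝ _) G)))
      = 0 := by
    have hconst : HasFDerivAt (fun w : EuclideanSpace ℝ (Fin m) => (n : ℝ) * τ)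
        (0 : EuclideanSpace ℝ (Fin m) →L[ℝ] ℝ) w₀ := hasFDerivAt_const _ _
    have : (fun w => ∑ i, l (β * (⟪w, x i⟫_ℝ - t w))) = fun _ => (n : ℝ) * τ :=
      funext himp
    rw [this] at hF
    exact hF.unique hconst
  -- apply to arbitrary v
  have key : ∀ v : EuclideanSpace ℝ (Fin m),
      ∑ i, deriv l (u i) * (β * (⟪x i, v⟫_ℝ - ⟪G, v⟫_ℝ)) = 0 := by
    intro v
    have := congrArg (fun (f : EuclideanSpace ℝ (Fin m) →L[ℝ] ℝ) => f v) hzero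
    simpa [ContinuousLinearMap.sum_apply, InnerProductSpace.toDual_apply_apply,
      ContinuousLinearMap.smul_apply, smul_eq_mul] using this
  set D := ∑ i, deriv l (u i) with hDdef
  have key2 : ∀ v : EuclideanSpace ℝ (Fin m),
      ⟪G, v⟫_ℝ = (1 / D) * ∑ i, deriv l (u i) * ⟪x i, v⟫_ℝ := by
    intro v
    have h := key v
    have h2 : β * ((∑ i, deriv l (u i) * ⟪x i, v⟫_ℝ) - D * ⟪G, v⟫_ℝ) = 0 := by
      rw [← h, hDdef, Finset.sum_mul, ← Finset.sum_sub_distrib, Finset.mul_sum]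
      exact Finset.sum_congr rfl fun i _ => by ring
    have h3 : (∑ i, deriv l (u i) * ⟪x i, v⟫_ℝ) - D * ⟪G, v⟫_ℝ = 0 := by
      rcases mul_eq_zero.1 h2 with h | h
      · exact absurd h (ne_of_gt hβ)
      · exact h
    have h4 : ∑ i, deriv l (u i) * ⟪x i, v⟫_ℝ = D * ⟪G, v⟫_ℝ := sub_eq_zero.mp h3
    rw [h4, one_div, inv_mul_cancel_left₀ hD]
  have : ∀ v : EuclideanSpace ℝ (Fin m),
      ⟪G, v⟫_ℝ = ⟪(1 / D) • ∑ i, deriv l (u i) • x i, v⟫_ℝ := by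
    intro v
    rw [key2 v, real_inner_smul_left, sum_inner]
    congr 1
    exact Finset.sum_congr rfl fun i _ => (real_inner_smul_left _ _ _).symm
  exact ext_inner_right ℝ this
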